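/- Let g11, g12, g21, g22 > 0, P1, P2 > 0, and α1, α2 ∈ (0, π/2). For any feasible beamforming configuration (angles β_{jk} ∈ [0, π/2] and powers P_{jk} ≥ 0 with P11 + P21 ≤ P1 and P12 + P22 ≤ P2), there exists another feasible configuration with P11' + P21' = P1 and P12' + P22' = P2 whose rates satisfy R1' ≥ R1 and R2' ≥ R2, where the rates are given by R_k = log2(1 + (g_{k1}·cos²(β_{k1} − α1)·P_{k1} + g_{k2}·cos²(β_{k2} − α2)·P_{k2})/(1 + g_{k1}·cos²(β_{j1})·P_{j1} + g_{k2}·cos²(β_{j2})·P_{j2})) for k = 1, 2 and j ≠ k. In particular, every boundary point of the beamforming rate region is achieved with full power at both base stations. -/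

import Mathlib

/-- Rate of mobile 1 under cooperative beamforming, parameterized by
beam angles `β jk` and powers `P jk`. -/
noncomputable def bfRate1 (g11 g12 α1 α2 β11 β21 β12 β22 P11 P21 P12 P22 : ℝ) : ℝ :=
  Real.logb 2 (1 +
    (g11 * Real.cos (β11 - α1) ^ 2 * P11 + g12 * Real.cos (β12 - α2) ^ 2 * P12) /
    (1 + g11 * Real.cos β21 ^ 2 * P21 + g12 * Real.cos β22 ^ 2 * P22))

/-- Rate of mobile 2 under cooperative beamforming. -/
noncomputable def bfRate2 (g21 g22 α1 α2 β11 β21 β12 β22 P11 P21 P12 P22 : ℝ) : ℝ :=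
  Real.logb 2 (1 +
    (g21 * Real.cos (β21 - α1) ^ 2 * P21 + g22 * Real.cos (β22 - α2) ^ 2 * P22) /
    (1 + g21 * Real.cos β11 ^ 2 * P11 + g22 * Real.cos β12 ^ 2 * P12))

/-- Key geometric lemma: given more power `P'`, one can find a beam angle producing
no more interference (`cos β' ^ 2 * P'`) and no less signal (`cos (β' - α) ^ 2 * P'`). -/
lemma beam_key (α β P P' : ℝ) (hα : α ∈ Set.Ioo 0 (Real.pi / 2))
    (hβ : β ∈ Set.Icc 0 (Real.pi / 2)) (hP : 0 ≤ P) (hPP : P ≤ P') :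
    ∃ β', β' ∈ Set.Icc 0 (Real.pi / 2) ∧
      Real.cos β' ^ 2 * P' ≤ Real.cos β ^ 2 * P ∧
      Real.cos (β - α) ^ 2 * P ≤ Real.cos (β' - α) ^ 2 * P' := by
  obtain ⟨hα0, hα2⟩ := hα
  obtain ⟨hβ0, hβ2⟩ := hβ
  rcases eq_or_lt_of_le (hP.trans hPP) with hP0 | hP0
  · -- P' = 0, hence P = 0
    refine ⟨β, ⟨hβ0, hβ2⟩, ?_, ?_⟩ <;> nlinarith [sq_nonneg (Real.cos β), sq_nonneg (Real.cos (β - α))]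
  -- main case: 0 < P'
  have hcosβ : 0 ≤ Real.cos β := Real.cos_nonneg_of_mem_Icc ⟨by linarith [Real.pi_pos], hβ2⟩
  have hsinβ : 0 ≤ Real.sin β := Real.sin_nonneg_of_nonneg_of_le_pi hβ0 (by linarith [Real.pi_pos])
  have hcos1 : Real.cos β ^ 2 ≤ 1 := by
    nlinarith [Real.sin_sq_add_cos_sq β, sq_nonneg (Real.sin β)]
  set q : ℝ := Real.cos β ^ 2 * P / P' with hq
  have hq0 : 0 ≤ q := by positivity
  have hq1 : q ≤ 1 := by
    rw [hq, div_le_one hP0]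
    nlinarith
  set c : ℝ := Real.sqrt q with hc
  have hc0 : 0 ≤ c := Real.sqrt_nonneg _
  have hc1 : c ≤ 1 := Real.sqrt_le_one.mpr hq1
  refine ⟨Real.arccos c, ⟨Real.arccos_nonneg c, Real.arccos_le_pi_div_two.mpr hc0⟩, ?_, ?_⟩
  · have : Real.cos (Real.arccos c) = c := Real.cos_arccos (by linarith) hc1
    rw [this, hc, Real.sq_sqrt hq0, hq]
    rw [div_mul_cancel₀ _ (ne_of_gt hP0)]
  · -- signal inequality
    have hcac : Real.cos (Real.arccos c) = c := Real.cos_arccos (by linarith) hc1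
    have hsac : Real.sin (Real.arccos c) = Real.sqrt (1 - c ^ 2) := Real.sin_arccos c
    -- amplitudes
    have key1 : Real.cos β * Real.sqrt P ≤ c * Real.sqrt P' := by
      have : c * Real.sqrt P' = Real.sqrt (q * P') := by
        rw [hc, ← Real.sqrt_mul hq0]
      rw [this, hq, div_mul_cancel₀ _ (ne_of_gt hP0)]
      have : Real.cos β ^ 2 * P = (Real.cos β * Real.sqrt P) ^ 2 := by
        rw [mul_pow, Real.sq_sqrt hP]
      rw [this, Real.sqrt_sq (by positivity)]
    have key2 : Real.sin β * Real.sqrt P ≤ Real.sqrt (1 - c ^ 2) * Real.sqrt P' := by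
      have h1 : Real.sqrt (1 - c ^ 2) * Real.sqrt P' = Real.sqrt ((1 - q) * P') := by
        rw [← Real.sqrt_mul (by nlinarith), hc, Real.sq_sqrt hq0]
      have h2 : (1 - q) * P' = P' - Real.cos β ^ 2 * P := by
        rw [hq, sub_mul, one_mul, div_mul_cancel₀ _ (ne_of_gt hP0)]
      have h3 : Real.sin β * Real.sqrt P = Real.sqrt (Real.sin β ^ 2 * P) := by
        rw [Real.sqrt_mul (sq_nonneg _), Real.sqrt_sq hsinβ]
      have h4 : Real.sin β ^ 2 * P = P - Real.cos β ^ 2 * P := by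
        nlinarith [Real.sin_sq_add_cos_sq β]
      rw [h1, h2, h3, h4]
      exact Real.sqrt_le_sqrt (by linarith)
    have hcosα : 0 ≤ Real.cos α := Real.cos_nonneg_of_mem_Icc
      ⟨by linarith [Real.pi_pos], le_of_lt hα2⟩
    have hsinα : 0 ≤ Real.sin α := Real.sin_nonneg_of_nonneg_of_le_pi (le_of_lt hα0)
      (by linarith [Real.pi_pos])
    have hamp : Real.cos (β - α) * Real.sqrt P ≤ Real.cos (Real.arccos c - α) * Real.sqrt P' := by
      rw [Real.cos_sub, Real.cos_sub, hcac, hsac]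
      nlinarith [key1, key2, mul_le_mul_of_nonneg_left key1 hcosα,
        mul_le_mul_of_nonneg_left key2 hsinα]
    have hnn : 0 ≤ Real.cos (β - α) * Real.sqrt P := by
      have : Real.cos (β - α) ≥ 0 := Real.cos_nonneg_of_mem_Icc
        ⟨by linarith, by linarith⟩
      positivity
    have hsq := pow_le_pow_left₀ hnn hamp 2
    rw [mul_pow, mul_pow, Real.sq_sqrt hP, Real.sq_sqrt (le_of_lt hP0)] at hsq
    exact hsq

/-- Monotonicity of the rate in signal and interference. -/
lemma rate_mono (N N' D D' : ℝ) (hN : 0 ≤ N) (hNN : N ≤ N') (hD : 1 ≤ D') (hDD : D' ≤ D) :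
    Real.logb 2 (1 + N / D) ≤ Real.logb 2 (1 + N' / D') := by
  have h1 : (0:ℝ) < D' := by linarith
  have h2 : (0:ℝ) < D := by linarith
  have h3 : N / D ≤ N' / D' := div_le_div₀ (by linarith) hNN h1 hDD
  have h4 : 0 ≤ N / D := div_nonneg hN (le_of_lt h2)
  exact Real.logb_le_logb_of_le one_lt_two (by linarith) (by linarith)

theorem beamforming_full_power_dominates
    (g11 g12 g21 g22 P1 P2 α1 α2 : ℝ)
    (hg11 : 0 < g11) (hg12 : 0 < g12) (hg21 : 0 < g21) (hg22 : 0 < g22)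
    (hP1 : 0 < P1) (hP2 : 0 < P2)
    (hα1 : α1 ∈ Set.Ioo 0 (Real.pi / 2)) (hα2 : α2 ∈ Set.Ioo 0 (Real.pi / 2))
    (β11 β21 β12 β22 : ℝ)
    (hβ11 : β11 ∈ Set.Icc 0 (Real.pi / 2)) (hβ21 : β21 ∈ Set.Icc 0 (Real.pi / 2))
    (hβ12 : β12 ∈ Set.Icc 0 (Real.pi / 2)) (hβ22 : β22 ∈ Set.Icc 0 (Real.pi / 2))
    (P11 P21 P12 P22 : ℝ)
    (hP11 : 0 ≤ P11) (hP21 : 0 ≤ P21) (hP12 : 0 ≤ P12) (hP22 : 0 ≤ P22)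
    (hbudget1 : P11 + P21 ≤ P1) (hbudget2 : P12 + P22 ≤ P2) :
    ∃ β11' β21' β12' β22' P11' P21' P12' P22' : ℝ,
      β11' ∈ Set.Icc 0 (Real.pi / 2) ∧ β21' ∈ Set.Icc 0 (Real.pi / 2) ∧
      β12' ∈ Set.Icc 0 (Real.pi / 2) ∧ β22' ∈ Set.Icc 0 (Real.pi / 2) ∧
      0 ≤ P11' ∧ 0 ≤ P21' ∧ 0 ≤ P12' ∧ 0 ≤ P22' ∧
      P11' + P21' = P1 ∧ P12' + P22' = P2 ∧
      bfRate1 g11 g12 α1 α2 β11 β21 β12 β22 P11 P21 P12 P22 ≤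
        bfRate1 g11 g12 α1 α2 β11' β21' β12' β22' P11' P21' P12' P22' ∧
      bfRate2 g21 g22 α1 α2 β11 β21 β12 β22 P11 P21 P12 P22 ≤
        bfRate2 g21 g22 α1 α2 β11' β21' β12' β22' P11' P21' P12' P22' := by
  obtain ⟨β21', hβ21', hI21, hS21⟩ := beam_key α1 β21 P21 (P1 - P11) hα1 hβ21 hP21 (by linarith)
  obtain ⟨β12', hβ12', hI12, hS12⟩ := beam_key α2 β12 P12 (P2 - P22) hα2 hβ12 hP12 (by linarith)
  have hc21 : (0:ℝ) ≤ Real.cos β21' ^ 2 * (P1 - P11) := by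
    have := sq_nonneg (Real.cos β21'); nlinarith
  have hc12 : (0:ℝ) ≤ Real.cos β12' ^ 2 * (P2 - P22) := by
    have := sq_nonneg (Real.cos β12'); nlinarith
  refine ⟨β11, β21', β12', β22, P11, P1 - P11, P2 - P22, P22,
    hβ11, hβ21', hβ12', hβ22, hP11, by linarith, by linarith, hP22, by ring, by ring, ?_, ?_⟩
  · unfold bfRate1
    apply rate_mono
    · positivity
    · have := mul_le_mul_of_nonneg_left hS12 (le_of_lt hg12)
      linarith
    · have h1 : 0 ≤ g11 * Real.cos β21' ^ 2 * (P1 - P11) :=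
        mul_le_mul_of_nonneg_left hc21 (le_of_lt hg11) |>.trans_eq' (by ring) |>.trans_eq (by ring)
      have h2 : 0 ≤ g12 * Real.cos β22 ^ 2 * P22 := by positivity
      linarith
    · have := mul_le_mul_of_nonneg_left hI21 (le_of_lt hg11)
      linarith
  · unfold bfRate2
    apply rate_mono
    · positivity
    · have := mul_le_mul_of_nonneg_left hS21 (le_of_lt hg21)
      linarith
    · have h1 : 0 ≤ g22 * Real.cos β12' ^ 2 * (P2 - P22) :=
        mul_le_mul_of_nonneg_left hc12 (le_of_lt hg22) |>.trans_eq' (by ring) |>.trans_eq (by ring)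
      have h2 : 0 ≤ g21 * Real.cos β11 ^ 2 * P11 := by positivity
      linarith
    · have := mul_le_mul_of_nonneg_left hI12 (le_of_lt hg22)
      linarith
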